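/- For every integer s with 1 ≤ s ≤ M−1, the expected age of the threshold-s policy admits the closed form A(s) = ( p²s² − p²s − 2(1−p)^{M−s}(1−p) + 2sp + 2 − 2p ) / ( 2p(sp + 1 − p) ). -/

import Mathlib

open Finset

/-- Expected age of the threshold-`s` aging-control policy: the mean of the
stationary age distribution of the threshold-`s` chain. -/
noncomputable def Aage (M : ℕ) (p : ℝ) (s : ℕ) : ℝ :=
  ((s : ℝ) + (1 - p) / p)⁻¹ *
    ((∑ i ∈ Finset.Icc 1 s, (i : ℝ))
      + (∑ i ∈ Finset.Icc (s + 1) (M - 1), (i : ℝ) * (1 - p) ^ (i - s))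
      + (M : ℝ) * (1 - p) ^ (M - s) / p)

/-- Gauss sum over `Icc 1 s`, cast to the reals. -/
lemma gauss_Icc (s : ℕ) : (∑ i ∈ Finset.Icc 1 s, (i:ℝ)) * 2 = (s:ℝ) * ((s:ℝ)+1) := by
  induction s with
  | zero => simp
  | succ n ih =>
    rw [Finset.sum_Icc_succ_top (by omega : 1 ≤ n+1)]
    push_cast
    linear_combination ih

/-- Closed form (cleared of denominators) for the geometric tail of the age sum. -/
lemma aux_sum (p : ℝ) (s m : ℕ) :
    p^2 * p * (∑ i ∈ Finset.Icc (s+1) (s+m), (i:ℝ) * (1-p)^(i-s))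
      + p^2 * ((s:ℝ) + m + 1) * (1-p)^(m+1)
    = p * (1-p) * ((s:ℝ)*p + 1 - (1-p)^(m+1)) := by
  induction m with
  | zero =>
    simp [Finset.Icc_self, Finset.Icc_eq_empty_of_lt (Nat.lt_succ_self s)]
    ring
  | succ m ih =>
    rw [show s + (m+1) = (s+m) + 1 from rfl,
      Finset.sum_Icc_succ_top (by omega : s+1 ≤ s+m+1)]
    have : (s + m + 1 - s) = m + 1 := by omega
    rw [this]
    push_cast
    push_cast at ih
    linear_combination ih

/-- Closed form for the expected age of the threshold-`s` policy. -/
theorem expected_age_closed_form (M s : ℕ) (p : ℝ)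
    (hM : 2 ≤ M) (hp : 0 < p) (hp1 : p < 1)
    (hs1 : 1 ≤ s) (hsM : s ≤ M - 1) :
    Aage M p s =
      (p ^ 2 * (s : ℝ) ^ 2 - p ^ 2 * (s : ℝ) - 2 * (1 - p) ^ (M - s) * (1 - p)
          + 2 * (s : ℝ) * p + 2 - 2 * p)
        / (2 * p * ((s : ℝ) * p + 1 - p)) := by
  obtain ⟨m, rfl⟩ : ∃ m, M = s + m + 1 := ⟨M - s - 1, by omega⟩
  have h1 : s + m + 1 - 1 = s + m := by omega
  have h2 : s + m + 1 - s = m + 1 := by omega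
  have hgauss := gauss_Icc s
  have hp0 : p ≠ 0 := ne_of_gt hp
  have hs1' : (1:ℝ) ≤ (s:ℝ) := by exact_mod_cast hs1
  have hd : (s:ℝ)*p + 1 - p ≠ 0 := by nlinarith
  have haux := aux_sum p s m
  unfold Aage
  rw [h1, h2]
  have hinv : ((s:ℝ) + (1-p)/p) = ((s:ℝ)*p + 1 - p)/p := by field_simp; ring
  rw [hinv]
  push_cast
  push_cast at haux
  field_simp
  apply mul_left_cancel₀ hp0
  linear_combination 2 * haux + p^3 * hgauss
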